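/- Let Σ = X ∪ Y be an alphabet with X = {x_1,…,x_n} and Y disjoint sets. Let G = x_1 Y_1 x_2 Y_2 ⋯ x_n Y_n be a genome where each Y_i for i ∈ [n] is a nonempty string over Y. Let c be the CNP with c(x_i) = 1 for all i ∈ [n] and c(y) = 0 for all y ∈ Y. Then d_GCNP(G, c) = n (in particular, the n deletions removing the substrings Y_1,…,Y_n achieve this distance). -/

import Mathlib

/-- An event is either a deletion `del i j` (removing the substring from position `i`
to position `j`, 1-based) or a duplication `dup i j p` (copying the substring from
position `i` to position `j` and inserting the copy after position `p`). -/
inductive GEvent where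
  | del (i j : ℕ)
  | dup (i j p : ℕ)
deriving DecidableEq

/-- Applying an event to a genome (a list of characters). -/
def applyEvent {α : Type*} (G : List α) : GEvent → List α
  | .del i j => G.take (i - 1) ++ G.drop j
  | .dup i j p => G.take p ++ ((G.drop (i - 1)).take (j - i + 1)) ++ G.drop p

/-- Validity of an event on a genome: `del i j` requires `1 ≤ i ≤ j ≤ |G|`;
`dup i j p` requires `1 ≤ i ≤ j ≤ |G|` and `p ∈ {0,…,i−1} ∪ {j,…,|G|}`. -/
def GEvent.Valid {α : Type*} (G : List α) : GEvent → Prop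
  | .del i j => 1 ≤ i ∧ i ≤ j ∧ j ≤ G.length
  | .dup i j p => 1 ≤ i ∧ i ≤ j ∧ j ≤ G.length ∧ (p ≤ i - 1 ∨ (j ≤ p ∧ p ≤ G.length))

/-- `applyEvents G E` is `G⟨E⟩`, the genome obtained by successively applying
the events of `E` to `G`. -/
def applyEvents {α : Type*} (G : List α) : List GEvent → List α
  | [] => G
  | e :: E => applyEvents (applyEvent G e) E

/-- A sequence of events is valid on `G` if each event is valid on the genome
obtained by applying the previous events. -/
def ValidSeq {α : Type*} (G : List α) : List GEvent → Prop
  | [] => True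
  | e :: E => e.Valid G ∧ ValidSeq (applyEvent G e) E

/-- The copy-number profile of a genome: the number of occurrences of each character. -/
def cnp {α : Type*} [DecidableEq α] (G : List α) : α → ℕ := fun s => G.count s

/-- The Genome-to-CNP distance: the minimum length of a valid event sequence turning `G`
into a genome with CNP `c` (`⊤` if there is none). -/
noncomputable def dGCNP {α : Type*} [DecidableEq α] (G : List α) (c : α → ℕ) : ℕ∞ :=
  sInf { k : ℕ∞ | ∃ E : List GEvent,
    ValidSeq G E ∧ (E.length : ℕ∞) = k ∧ cnp (applyEvents G E) = c }

namespace AltEqAux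

/-- Last element of a boolean list, with default. -/
def lastD : List Bool → Bool → Bool
  | [], d => d
  | a :: t, _ => lastD t a

@[simp] lemma lastD_nil (d : Bool) : lastD [] d = d := rfl
@[simp] lemma lastD_cons (a d : Bool) (t : List Bool) : lastD (a :: t) d = lastD t a := rfl

lemma lastD_ne_nil {l : List Bool} (h : l ≠ []) (a b : Bool) :
    lastD l a = lastD l b := by
  cases l with
  | nil => exact absurd rfl h
  | cons c t => simp

/-- Number of maximal `true`-runs, given the value `p` of the previous element. -/
def R : Bool → List Bool → ℕ
  | _, [] => 0
  | p, b :: t => (if b = true ∧ p = false then 1 else 0) + R b t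

@[simp] lemma R_nil (p : Bool) : R p [] = 0 := rfl
lemma R_cons (p b : Bool) (t : List Bool) :
    R p (b :: t) = (if b = true ∧ p = false then 1 else 0) + R b t := rfl

lemma R_append (p : Bool) (X Z : List Bool) :
    R p (X ++ Z) = R p X + R (lastD X p) Z := by
  induction X generalizing p with
  | nil => simp
  | cons a t ih => simp [R_cons, ih a]; omega

lemma R_true_le (p : Bool) (l : List Bool) : R true l ≤ R p l := by
  cases l with
  | nil => exact le_refl _
  | cons b t => cases p <;> cases b <;> simp [R_cons]

lemma R_le_false (p : Bool) (l : List Bool) : R p l ≤ R false l := by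
  cases l with
  | nil => exact le_refl _
  | cons b t => cases p <;> cases b <;> simp [R_cons]

lemma R_false_le (l : List Bool) : R false l ≤ R true l + 1 := by
  cases l with
  | nil => simp
  | cons b t => cases b <;> simp [R_cons] <;> omega

lemma R_le_succ (p q : Bool) (l : List Bool) : R p l ≤ R q l + 1 :=
  le_trans (R_le_false p l) (le_trans (R_false_le l) (by
    have := R_true_le q l; omega))

lemma R_and_head (a b p q : Bool) :
    (if (a && b) = true ∧ (p && q) = false then 1 else 0)
      ≤ (if a = true ∧ p = false then 1 else 0) + (if b = true ∧ q = false then 1 else 0) := by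
  cases a <;> cases b <;> cases p <;> cases q <;> simp

lemma R_and (A : List Bool) : ∀ (B : List Bool), A.length = B.length → ∀ (p q : Bool),
    R (p && q) (List.zipWith and A B) ≤ R p A + R q B := by
  induction A with
  | nil => intro B h p q; simp
  | cons a t ih =>
    intro B h p q
    cases B with
    | nil => simp at h
    | cons b s =>
      have hlen : t.length = s.length := by simpa using h
      have IH := ih s hlen a b
      have hd := R_and_head a b p q
      simp only [List.zipWith_cons_cons, R_cons]
      omega

lemma lastD_zipWith_and : ∀ (A B : List Bool), A.length = B.length → ∀ (p q : Bool),
    lastD (List.zipWith and A B) (p && q) = (lastD A p && lastD B q) := by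
  intro A
  induction A with
  | nil =>
    intro B h p q
    have : B = [] := List.length_eq_zero_iff.mp h.symm
    subst this; simp
  | cons a t ih =>
    intro B h p q
    cases B with
    | nil => simp at h
    | cons b s =>
      simp only [List.zipWith_cons_cons, lastD_cons]
      exact ih s (by simpa using h) a b



lemma R_allTrue_true {l : List Bool} (h : ∀ b ∈ l, b = true) : R true l = 0 := by
  induction l with
  | nil => simp
  | cons b t ih =>
    have hb : b = true := h b (by simp)
    subst hb
    simp [R_cons, ih (fun b hb => h b (by simp [hb]))]

lemma R_allTrue_le {l : List Bool} (h : ∀ b ∈ l, b = true) (p : Bool) : R p l ≤ 1 := by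
  cases l with
  | nil => simp
  | cons b t =>
    have hb : b = true := h b (by simp)
    subst hb
    have := R_allTrue_true (l := t) (fun b hb => h b (by simp [hb]))
    simp [R_cons, this]
    split <;> omega

lemma lastD_allTrue {l : List Bool} (h : ∀ b ∈ l, b = true) (hne : l ≠ []) (d : Bool) :
    lastD l d = true := by
  induction l generalizing d with
  | nil => exact absurd rfl hne
  | cons b t ih =>
    cases t with
    | nil => simpa using h b (by simp)
    | cons c s => simpa using ih (fun x hx => h x (by simp at hx ⊢; tauto)) (by simp) b

/-- Key deletion surgery bound. -/
lemma maskDel (U S V : List Bool) (hS : ∀ b ∈ S, b = true) :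
    R false (U ++ (S ++ V)) ≤ R false (U ++ V) + 1 := by
  rw [R_append, R_append, R_append]
  rcases eq_or_ne S [] with h | h
  · subst h; simp
  · have h1 : R (lastD U false) S ≤ 1 := R_allTrue_le hS _
    have h2 : lastD S (lastD U false) = true := lastD_allTrue hS h _
    rw [h2]
    have h3 := R_true_le (lastD U false) V
    omega

lemma maskA_core (Z V : List Bool) (l1 l2 : Bool) :
    R (l1 && l2) Z + R (lastD Z (l1 && l2)) V ≤ R l1 Z + R l2 V + 1 := by
  cases l1 with
  | false =>
    simp only [Bool.false_and]
    have := R_le_succ (lastD Z false) l2 V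
    omega
  | true =>
    cases l2 with
    | true =>
      simp only [Bool.and_self]
      have := R_le_succ (lastD Z true) true V
      omega
    | false =>
      simp only [Bool.and_false]
      have h1 : R false Z ≤ R true Z + 1 := R_false_le Z
      have h2 : R (lastD Z false) V ≤ R false V := R_le_false _ V
      omega

lemma maskB_core (Z V : List Bool) (l1 l2 lU : Bool) :
    R lU Z + R (l1 && l2) V ≤ R l1 Z + R l2 V + 1 := by
  cases l1 with
  | true =>
    have h1 : R lU Z ≤ R true Z + 1 := R_le_succ _ _ _
    simp only [Bool.true_and]
    omega
  | false =>
    have h1 : R lU Z ≤ R false Z := R_le_false _ _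
    have h2 : R false V ≤ R l2 V + 1 := R_le_succ _ _ _
    simp only [Bool.false_and]
    omega

/-- Duplication surgery bound, variant A : the AND-mask sits at the first window. -/
lemma maskA (U Z V M1 M2 : List Bool) (h : M1.length = M2.length) :
    R false (U ++ (List.zipWith and M1 M2 ++ (Z ++ V)))
      ≤ R false (U ++ (M1 ++ (Z ++ (M2 ++ V)))) + 1 := by
  rcases eq_or_ne M1 [] with hM | hM
  · have hM2 : M2 = [] := by
      subst hM; simpa using h.symm
    subst hM; subst hM2; simp
  have hM2 : M2 ≠ [] := by
    intro h2; subst h2; simp at h; simp [h] at hM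
  rw [R_append, R_append, R_append]
  rw [R_append, R_append, R_append, R_append]
  have e1 : lastD (List.zipWith and M1 M2) (lastD U false)
      = (lastD M1 (lastD U false) && lastD M2 true) := by
    simpa using lastD_zipWith_and M1 M2 h (lastD U false) true
  rw [e1]
  have e2 : lastD M2 (lastD Z (lastD M1 (lastD U false))) = lastD M2 true :=
    lastD_ne_nil hM2 _ _
  rw [e2]
  have hbound : R (lastD U false) (List.zipWith and M1 M2)
      ≤ R (lastD U false) M1 + R true M2 := by
    simpa using R_and M1 M2 h (lastD U false) true
  have htrue : R true M2 ≤ R (lastD Z (lastD M1 (lastD U false))) M2 := R_true_le _ M2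
  have hcore := maskA_core Z V (lastD M1 (lastD U false)) (lastD M2 true)
  omega

/-- Duplication surgery bound, variant B : the AND-mask sits at the second window. -/
lemma maskB (U Z V M1 M2 : List Bool) (h : M1.length = M2.length) :
    R false (U ++ (Z ++ (List.zipWith and M1 M2 ++ V)))
      ≤ R false (U ++ (M1 ++ (Z ++ (M2 ++ V)))) + 1 := by
  rcases eq_or_ne M1 [] with hM | hM
  · have hM2 : M2 = [] := by
      subst hM; simpa using h.symm
    subst hM; subst hM2; simp
  have hM2 : M2 ≠ [] := by
    intro h2; subst h2; simp at h; simp [h] at hM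
  rw [R_append, R_append, R_append]
  rw [R_append, R_append, R_append, R_append]
  have e0 : lastD M1 true = lastD M1 (lastD U false) := lastD_ne_nil hM _ _
  have e1 : lastD (List.zipWith and M1 M2) (lastD Z (lastD U false))
      = (lastD M1 (lastD U false) && lastD M2 true) := by
    have := lastD_zipWith_and M1 M2 h true (lastD Z (lastD U false))
    rw [e0, lastD_ne_nil hM2 (lastD Z (lastD U false)) true] at this
    simpa using this
  rw [e1]
  have e2 : lastD M2 (lastD Z (lastD M1 (lastD U false))) = lastD M2 true :=
    lastD_ne_nil hM2 _ _
  rw [e2]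
  have hbound : R (lastD Z (lastD U false)) (List.zipWith and M1 M2)
      ≤ R (lastD U false) M1 + R (lastD Z (lastD U false)) M2 := by
    have := R_and M1 M2 h true (lastD Z (lastD U false))
    have h3 : R true M1 ≤ R (lastD U false) M1 := R_true_le _ M1
    simp only [Bool.true_and] at this
    omega
  rcases eq_or_ne Z [] with hZ | hZ
  · subst hZ
    simp only [lastD_nil, R_nil] at hbound ⊢
    have hcore := maskB_core M2 V (lastD M1 (lastD U false)) (lastD M2 true)
        (lastD U false)
    omega
  · have e3 : lastD Z (lastD U false) = lastD Z (lastD M1 (lastD U false)) :=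
      lastD_ne_nil hZ _ _
    rw [e3] at hbound ⊢
    have hcore := maskB_core Z V (lastD M1 (lastD U false)) (lastD M2 true)
        (lastD U false)
    omega


lemma mem_zip_replicate_false {α : Type*} {H : List α} {a : α} (ha : a ∈ H) :
    (a, false) ∈ H.zip (List.replicate H.length false) := by
  induction H with
  | nil => simp at ha
  | cons b t ih =>
    rw [List.length_cons, List.replicate_succ, List.zip_cons_cons]
    rcases List.mem_cons.mp ha with h | h
    · subst h; exact List.mem_cons_self
    · exact List.mem_cons_of_mem _ (ih h)

lemma R_replicate_false (k : ℕ) : R false (List.replicate k false) = 0 := by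
  induction k with
  | zero => simp
  | succ m ih => simp [List.replicate_succ, R_cons, ih]

lemma zip_and_mem {α : Type*} :
    ∀ (S : List α) (M1 M2 : List Bool), M1.length = M2.length →
    ∀ {a : α} {b : Bool}, (a, b) ∈ S.zip (List.zipWith and M1 M2) →
    ∃ b1 b2, b = (b1 && b2) ∧ (a, b1) ∈ S.zip M1 ∧ (a, b2) ∈ S.zip M2 := by
  intro S
  induction S with
  | nil => intro M1 M2 h a b hm; simp at hm
  | cons s t ih =>
    intro M1 M2 h a b hm
    cases M1 with
    | nil => simp at hm
    | cons b1 m1 =>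
      cases M2 with
      | nil => simp at h
      | cons b2 m2 =>
        rw [List.zipWith_cons_cons, List.zip_cons_cons] at hm
        rcases List.mem_cons.mp hm with hm | hm
        · refine ⟨b1, b2, ?_, ?_, ?_⟩
          · exact (Prod.mk.injEq _ _ _ _ ▸ hm).2 ▸ rfl
          · have : a = s := (Prod.mk.injEq _ _ _ _ ▸ hm).1
            subst this
            exact List.mem_cons_self
          · have : a = s := (Prod.mk.injEq _ _ _ _ ▸ hm).1
            subst this
            exact List.mem_cons_self
        · obtain ⟨c1, c2, hc, h1, h2⟩ := ih m1 m2 (by simpa using h) hm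
          exact ⟨c1, c2, hc, List.mem_cons_of_mem _ h1, List.mem_cons_of_mem _ h2⟩

lemma zip_and_mem_left {α : Type*} :
    ∀ (S : List α) (M1 M2 : List Bool), M1.length = M2.length →
    ∀ {a : α}, (a, false) ∈ S.zip M1 → (a, false) ∈ S.zip (List.zipWith and M1 M2) := by
  intro S
  induction S with
  | nil => intro M1 M2 h a hm; simp at hm
  | cons s t ih =>
    intro M1 M2 h a hm
    cases M1 with
    | nil => simp at hm
    | cons b1 m1 =>
      cases M2 with
      | nil => simp at h
      | cons b2 m2 =>
        rw [List.zip_cons_cons] at hm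
        rw [List.zipWith_cons_cons, List.zip_cons_cons]
        rcases List.mem_cons.mp hm with hm | hm
        · have h1 : a = s := (Prod.mk.injEq _ _ _ _ ▸ hm).1
          have h2 : false = b1 := (Prod.mk.injEq _ _ _ _ ▸ hm).2
          subst h1
          rw [← h2, Bool.false_and]
          exact List.mem_cons_self
        · exact List.mem_cons_of_mem _ (ih m1 m2 (by simpa using h) hm)

lemma zip_and_mem_right {α : Type*} :
    ∀ (S : List α) (M1 M2 : List Bool), M1.length = M2.length →
    ∀ {a : α}, (a, false) ∈ S.zip M2 → (a, false) ∈ S.zip (List.zipWith and M1 M2) := by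
  intro S
  induction S with
  | nil => intro M1 M2 h a hm; simp at hm
  | cons s t ih =>
    intro M1 M2 h a hm
    cases M2 with
    | nil => simp at hm
    | cons b2 m2 =>
      cases M1 with
      | nil => simp at h
      | cons b1 m1 =>
        rw [List.zip_cons_cons] at hm
        rw [List.zipWith_cons_cons, List.zip_cons_cons]
        rcases List.mem_cons.mp hm with hm | hm
        · have h1 : a = s := (Prod.mk.injEq _ _ _ _ ▸ hm).1
          have h2 : false = b2 := (Prod.mk.injEq _ _ _ _ ▸ hm).2
          subst h1
          rw [← h2, Bool.and_false]
          exact List.mem_cons_self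
        · exact List.mem_cons_of_mem _ (ih m1 m2 (by simpa using h) hm)

/-- A valid mask on a genome: every `Y`-character is masked (`true`), and for
each `i` some occurrence of `x i` is unmasked (`false`). -/
def MaskOK {α : Type*} {n : ℕ} (Y : Set α) (x : Fin n → α) (H : List α) (D : List Bool) : Prop :=
  D.length = H.length ∧
  (∀ q ∈ H.zip D, q.1 ∈ Y → q.2 = true) ∧
  (∀ i : Fin n, (x i, false) ∈ H.zip D)

section Steps

variable {α : Type*} {n : ℕ} (Y : Set α) (x : Fin n → α)

lemma stepDel_abstract (U S V : List α) (D' : List Bool)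
    (h : MaskOK Y x (U ++ V) D') :
    ∃ D, MaskOK Y x (U ++ (S ++ V)) D ∧ R false D ≤ R false D' + 1 := by
  obtain ⟨hlen, hY, hX⟩ := h
  have hlen' : D'.length = U.length + V.length := by simpa using hlen
  have hEU : (D'.take U.length).length = U.length := by
    rw [List.length_take]; omega
  have hEV : (D'.drop U.length).length = V.length := by
    rw [List.length_drop]; omega
  have hD' : D' = D'.take U.length ++ D'.drop U.length := (List.take_append_drop _ _).symm
  refine ⟨D'.take U.length ++ (List.replicate S.length true ++ D'.drop U.length), ?_, ?_⟩
  · have hzipH : (U ++ (S ++ V)).zip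
        (D'.take U.length ++ (List.replicate S.length true ++ D'.drop U.length))
        = U.zip (D'.take U.length) ++
          (S.zip (List.replicate S.length true) ++ V.zip (D'.drop U.length)) := by
      rw [List.zip_append hEU.symm, List.zip_append (by simp)]
    have hzipHe : (U ++ V).zip D' = U.zip (D'.take U.length) ++ V.zip (D'.drop U.length) := by
      conv_lhs => rw [hD']
      rw [List.zip_append hEU.symm]
    refine ⟨by simp; omega, ?_, ?_⟩
    · intro q hq hqY
      rw [hzipH] at hq
      rcases List.mem_append.mp hq with hq | hq
      · exact hY q (by rw [hzipHe]; exact List.mem_append_left _ hq) hqY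
      rcases List.mem_append.mp hq with hq | hq
      · exact List.eq_of_mem_replicate (List.of_mem_zip hq).2
      · exact hY q (by rw [hzipHe]; exact List.mem_append_right _ hq) hqY
    · intro i
      have := hX i
      rw [hzipHe] at this
      rw [hzipH]
      rcases List.mem_append.mp this with hq | hq
      · exact List.mem_append_left _ hq
      · exact List.mem_append_right _ (List.mem_append_right _ hq)
  · have := maskDel (D'.take U.length) (List.replicate S.length true) (D'.drop U.length)
      (fun b hb => List.eq_of_mem_replicate hb)
    rw [← hD'] at this
    exact this


lemma stepDup_split (U S Z V : List α) (D' : List Bool)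
    (hlen : D'.length = (U ++ (S ++ (Z ++ (S ++ V)))).length) :
    D' = D'.take U.length ++
      ((D'.drop U.length).take S.length ++
        (((D'.drop U.length).drop S.length).take Z.length ++
          ((((D'.drop U.length).drop S.length).drop Z.length).take S.length ++
            (((D'.drop U.length).drop S.length).drop Z.length).drop S.length))) := by
  rw [List.take_append_drop, List.take_append_drop, List.take_append_drop,
    List.take_append_drop]

lemma stepDupB_abstract (U Z S V : List α) (D' : List Bool)
    (h : MaskOK Y x (U ++ (S ++ (Z ++ (S ++ V)))) D') :
    ∃ D, MaskOK Y x (U ++ (Z ++ (S ++ V))) D ∧ R false D ≤ R false D' + 1 := by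
  obtain ⟨hlen, hY, hX⟩ := h
  have hlen' : D'.length = U.length + (S.length + (Z.length + (S.length + V.length))) := by
    simpa using hlen
  set EU := D'.take U.length with hEUdef
  set r1 := D'.drop U.length with hr1def
  set M1 := r1.take S.length with hM1def
  set r2 := r1.drop S.length with hr2def
  set EZ := r2.take Z.length with hEZdef
  set r3 := r2.drop Z.length with hr3def
  set M2 := r3.take S.length with hM2def
  set EV := r3.drop S.length with hEVdef
  have lEU : EU.length = U.length := by rw [hEUdef, List.length_take]; omega
  have lr1 : r1.length = S.length + (Z.length + (S.length + V.length)) := by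
    rw [hr1def, List.length_drop]; omega
  have lM1 : M1.length = S.length := by rw [hM1def, List.length_take]; omega
  have lr2 : r2.length = Z.length + (S.length + V.length) := by
    rw [hr2def, List.length_drop]; omega
  have lEZ : EZ.length = Z.length := by rw [hEZdef, List.length_take]; omega
  have lr3 : r3.length = S.length + V.length := by rw [hr3def, List.length_drop]; omega
  have lM2 : M2.length = S.length := by rw [hM2def, List.length_take]; omega
  have lEV : EV.length = V.length := by rw [hEVdef, List.length_drop]; omega
  have hD' : D' = EU ++ (M1 ++ (EZ ++ (M2 ++ EV))) := stepDup_split U S Z V D' hlen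
  have hzipHe : (U ++ (S ++ (Z ++ (S ++ V)))).zip D'
      = U.zip EU ++ (S.zip M1 ++ (Z.zip EZ ++ (S.zip M2 ++ V.zip EV))) := by
    conv_lhs => rw [hD']
    rw [List.zip_append lEU.symm, List.zip_append lM1.symm, List.zip_append lEZ.symm,
      List.zip_append lM2.symm]
  have lAnd : (List.zipWith and M1 M2).length = S.length := by
    rw [List.length_zipWith]; omega
  have hzipH : (U ++ (Z ++ (S ++ V))).zip (EU ++ (EZ ++ (List.zipWith and M1 M2 ++ EV)))
      = U.zip EU ++ (Z.zip EZ ++ (S.zip (List.zipWith and M1 M2) ++ V.zip EV)) := by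
    rw [List.zip_append lEU.symm, List.zip_append lEZ.symm, List.zip_append lAnd.symm]
  refine ⟨EU ++ (EZ ++ (List.zipWith and M1 M2 ++ EV)), ⟨?_, ?_, ?_⟩, ?_⟩
  · simp only [List.length_append]
    omega
  · intro q hq hqY
    rw [hzipH] at hq
    rcases List.mem_append.mp hq with hq | hq
    · exact hY q (by rw [hzipHe]; exact List.mem_append_left _ hq) hqY
    rcases List.mem_append.mp hq with hq | hq
    · exact hY q (by
        rw [hzipHe]
        exact List.mem_append_right _ (List.mem_append_right _ (List.mem_append_left _ hq))) hqY
    rcases List.mem_append.mp hq with hq | hq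
    · -- the AND window
      obtain ⟨a, b⟩ := q
      obtain ⟨b1, b2, hb, h1, h2⟩ := zip_and_mem S M1 M2 (by omega) hq
      have hb1 : b1 = true := hY (a, b1) (by
        rw [hzipHe]
        exact List.mem_append_right _ (List.mem_append_left _ h1)) hqY
      have hb2 : b2 = true := hY (a, b2) (by
        rw [hzipHe]
        exact List.mem_append_right _ (List.mem_append_right _
          (List.mem_append_right _ (List.mem_append_left _ h2)))) hqY
      simp [hb, hb1, hb2]
    · exact hY q (by
        rw [hzipHe]
        exact List.mem_append_right _ (List.mem_append_right _
          (List.mem_append_right _ (List.mem_append_right _ hq)))) hqY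
  · intro i
    have hi := hX i
    rw [hzipHe] at hi
    rw [hzipH]
    rcases List.mem_append.mp hi with hi | hi
    · exact List.mem_append_left _ hi
    rcases List.mem_append.mp hi with hi | hi
    · exact List.mem_append_right _ (List.mem_append_right _ (List.mem_append_left _
        (zip_and_mem_left S M1 M2 (by omega) hi)))
    rcases List.mem_append.mp hi with hi | hi
    · exact List.mem_append_right _ (List.mem_append_left _ hi)
    rcases List.mem_append.mp hi with hi | hi
    · exact List.mem_append_right _ (List.mem_append_right _ (List.mem_append_left _
        (zip_and_mem_right S M1 M2 (by omega) hi)))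
    · exact List.mem_append_right _ (List.mem_append_right _ (List.mem_append_right _ hi))
  · have := maskB EU EZ EV M1 M2 (by omega)
    rw [← hD'] at this
    exact this

lemma stepDupA_abstract (U Z S V : List α) (D' : List Bool)
    (h : MaskOK Y x (U ++ (S ++ (Z ++ (S ++ V)))) D') :
    ∃ D, MaskOK Y x (U ++ (S ++ (Z ++ V))) D ∧ R false D ≤ R false D' + 1 := by
  obtain ⟨hlen, hY, hX⟩ := h
  have hlen' : D'.length = U.length + (S.length + (Z.length + (S.length + V.length))) := by
    simpa using hlen
  set EU := D'.take U.length with hEUdef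
  set r1 := D'.drop U.length with hr1def
  set M1 := r1.take S.length with hM1def
  set r2 := r1.drop S.length with hr2def
  set EZ := r2.take Z.length with hEZdef
  set r3 := r2.drop Z.length with hr3def
  set M2 := r3.take S.length with hM2def
  set EV := r3.drop S.length with hEVdef
  have lEU : EU.length = U.length := by rw [hEUdef, List.length_take]; omega
  have lr1 : r1.length = S.length + (Z.length + (S.length + V.length)) := by
    rw [hr1def, List.length_drop]; omega
  have lM1 : M1.length = S.length := by rw [hM1def, List.length_take]; omega
  have lr2 : r2.length = Z.length + (S.length + V.length) := by
    rw [hr2def, List.length_drop]; omega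
  have lEZ : EZ.length = Z.length := by rw [hEZdef, List.length_take]; omega
  have lr3 : r3.length = S.length + V.length := by rw [hr3def, List.length_drop]; omega
  have lM2 : M2.length = S.length := by rw [hM2def, List.length_take]; omega
  have lEV : EV.length = V.length := by rw [hEVdef, List.length_drop]; omega
  have hD' : D' = EU ++ (M1 ++ (EZ ++ (M2 ++ EV))) := stepDup_split U S Z V D' hlen
  have hzipHe : (U ++ (S ++ (Z ++ (S ++ V)))).zip D'
      = U.zip EU ++ (S.zip M1 ++ (Z.zip EZ ++ (S.zip M2 ++ V.zip EV))) := by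
    conv_lhs => rw [hD']
    rw [List.zip_append lEU.symm, List.zip_append lM1.symm, List.zip_append lEZ.symm,
      List.zip_append lM2.symm]
  have lAnd : (List.zipWith and M1 M2).length = S.length := by
    rw [List.length_zipWith]; omega
  have hzipH : (U ++ (S ++ (Z ++ V))).zip (EU ++ (List.zipWith and M1 M2 ++ (EZ ++ EV)))
      = U.zip EU ++ (S.zip (List.zipWith and M1 M2) ++ (Z.zip EZ ++ V.zip EV)) := by
    rw [List.zip_append lEU.symm, List.zip_append lAnd.symm, List.zip_append lEZ.symm]
  refine ⟨EU ++ (List.zipWith and M1 M2 ++ (EZ ++ EV)), ⟨?_, ?_, ?_⟩, ?_⟩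
  · simp only [List.length_append]
    omega
  · intro q hq hqY
    rw [hzipH] at hq
    rcases List.mem_append.mp hq with hq | hq
    · exact hY q (by rw [hzipHe]; exact List.mem_append_left _ hq) hqY
    rcases List.mem_append.mp hq with hq | hq
    · obtain ⟨a, b⟩ := q
      obtain ⟨b1, b2, hb, h1, h2⟩ := zip_and_mem S M1 M2 (by omega) hq
      have hb1 : b1 = true := hY (a, b1) (by
        rw [hzipHe]
        exact List.mem_append_right _ (List.mem_append_left _ h1)) hqY
      have hb2 : b2 = true := hY (a, b2) (by
        rw [hzipHe]
        exact List.mem_append_right _ (List.mem_append_right _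
          (List.mem_append_right _ (List.mem_append_left _ h2)))) hqY
      simp [hb, hb1, hb2]
    rcases List.mem_append.mp hq with hq | hq
    · exact hY q (by
        rw [hzipHe]
        exact List.mem_append_right _ (List.mem_append_right _ (List.mem_append_left _ hq))) hqY
    · exact hY q (by
        rw [hzipHe]
        exact List.mem_append_right _ (List.mem_append_right _
          (List.mem_append_right _ (List.mem_append_right _ hq)))) hqY
  · intro i
    have hi := hX i
    rw [hzipHe] at hi
    rw [hzipH]
    rcases List.mem_append.mp hi with hi | hi
    · exact List.mem_append_left _ hi
    rcases List.mem_append.mp hi with hi | hi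
    · exact List.mem_append_right _ (List.mem_append_left _
        (zip_and_mem_left S M1 M2 (by omega) hi))
    rcases List.mem_append.mp hi with hi | hi
    · exact List.mem_append_right _ (List.mem_append_right _ (List.mem_append_left _ hi))
    rcases List.mem_append.mp hi with hi | hi
    · exact List.mem_append_right _ (List.mem_append_left _
        (zip_and_mem_right S M1 M2 (by omega) hi))
    · exact List.mem_append_right _ (List.mem_append_right _ (List.mem_append_right _ hi))
  · have := maskA EU EZ EV M1 M2 (by omega)
    rw [← hD'] at this
    exact this


lemma step (H : List α) (e : GEvent) (hv : e.Valid H) (D' : List Bool)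
    (h : MaskOK Y x (applyEvent H e) D') :
    ∃ D : List Bool, MaskOK Y x H D ∧ R false D ≤ R false D' + 1 := by
  cases e with
  | del i j =>
    obtain ⟨h1, h2, h3⟩ := hv
    have e1 : (H.drop (i-1)).drop (j-i+1) = H.drop j := by
      rw [List.drop_drop]; congr 1; omega
    have hH : H = H.take (i-1) ++ ((H.drop (i-1)).take (j-i+1) ++ H.drop j) := by
      rw [← e1, List.take_append_drop, List.take_append_drop]
    have hHe : applyEvent H (GEvent.del i j) = H.take (i-1) ++ H.drop j := rfl
    rw [hHe] at h
    obtain ⟨D, hD, hR⟩ := stepDel_abstract Y x (H.take (i-1))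
      ((H.drop (i-1)).take (j-i+1)) (H.drop j) D' h
    exact ⟨D, by rw [hH]; exact hD, hR⟩
  | dup i j p =>
    obtain ⟨h1, h2, h3, hp⟩ := hv
    have e3 : (H.drop (i-1)).drop (j-i+1) = H.drop j := by
      rw [List.drop_drop]; congr 1; omega
    have hHe : applyEvent H (GEvent.dup i j p)
        = H.take p ++ ((H.drop (i-1)).take (j-i+1) ++ H.drop p) := by
      show H.take p ++ (H.drop (i - 1)).take (j - i + 1) ++ H.drop p = _
      rw [List.append_assoc]
    rcases hp with hp | hp
    · -- p ≤ i - 1 : He = U ++ S ++ Z ++ S ++ V, H = U ++ Z ++ S ++ V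
      have a1 : H.take p ++ (H.drop p).take (i-1-p) = H.take (i-1) := by
        rw [← List.take_add]; congr 1; omega
      have a2 : (H.drop p).drop (i-1-p) = H.drop (i-1) := by
        rw [List.drop_drop]; congr 1; omega
      have hdropp : H.drop p = (H.drop p).take (i-1-p) ++
          ((H.drop (i-1)).take (j-i+1) ++ H.drop j) := by
        rw [← e3, List.take_append_drop, ← a2, List.take_append_drop]
      have hH : H = H.take p ++ ((H.drop p).take (i-1-p) ++
          ((H.drop (i-1)).take (j-i+1) ++ H.drop j)) := by
        rw [← hdropp, List.take_append_drop]
      have hHe2 : applyEvent H (GEvent.dup i j p)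
          = H.take p ++ ((H.drop (i-1)).take (j-i+1) ++
            ((H.drop p).take (i-1-p) ++ ((H.drop (i-1)).take (j-i+1) ++ H.drop j))) := by
        rw [hHe, ← hdropp]
      rw [hHe2] at h
      obtain ⟨D, hD, hR⟩ := stepDupB_abstract Y x (H.take p) ((H.drop p).take (i-1-p))
        ((H.drop (i-1)).take (j-i+1)) (H.drop j) D' h
      exact ⟨D, by rw [hH]; exact hD, hR⟩
    · -- j ≤ p ≤ |H| : He = U ++ S ++ Z ++ S ++ V, H = U ++ S ++ Z ++ V
      obtain ⟨hjp, hplen⟩ := hp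
      have b1 : (H.drop j).drop (p-j) = H.drop p := by
        rw [List.drop_drop]; congr 1; omega
      have hdropj : H.drop j = (H.drop j).take (p-j) ++ H.drop p := by
        rw [← b1, List.take_append_drop]
      have hH : H = H.take (i-1) ++ ((H.drop (i-1)).take (j-i+1) ++
          ((H.drop j).take (p-j) ++ H.drop p)) := by
        rw [← hdropj, ← e3, List.take_append_drop, List.take_append_drop]
      have htakep : H.take p = H.take (i-1) ++ ((H.drop (i-1)).take (j-i+1) ++
          (H.drop j).take (p-j)) := by
        have c1 : H.take p = H.take (i-1) ++ (H.drop (i-1)).take (p-(i-1)) := by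
          rw [← List.take_add]; congr 1; omega
        have c2 : (H.drop (i-1)).take (p-(i-1))
            = (H.drop (i-1)).take (j-i+1) ++ ((H.drop (i-1)).drop (j-i+1)).take (p-j) := by
          rw [← List.take_add]; congr 1; omega
        rw [c1, c2, e3]
      have hHe2 : applyEvent H (GEvent.dup i j p)
          = H.take (i-1) ++ ((H.drop (i-1)).take (j-i+1) ++
            ((H.drop j).take (p-j) ++ ((H.drop (i-1)).take (j-i+1) ++ H.drop p))) := by
        rw [hHe, htakep]
        simp [List.append_assoc]
      rw [hHe2] at h
      obtain ⟨D, hD, hR⟩ := stepDupA_abstract Y x (H.take (i-1)) ((H.drop j).take (p-j))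
        ((H.drop (i-1)).take (j-i+1)) (H.drop p) D' h
      exact ⟨D, by rw [hH]; exact hD, hR⟩


lemma lower_masks [DecidableEq α] (c : α → ℕ) (hc1 : ∀ i, c (x i) = 1)
    (hcY : ∀ a ∈ Y, c a = 0) :
    ∀ (E : List GEvent) (H : List α), ValidSeq H E → cnp (applyEvents H E) = c →
    ∃ D, MaskOK Y x H D ∧ R false D ≤ E.length := by
  intro E
  induction E with
  | nil =>
    intro H _ hcnp
    have hcnt : ∀ a, H.count a = c a := fun a => congrFun hcnp a
    refine ⟨List.replicate H.length false, ⟨by simp, ?_, ?_⟩, by simp [R_replicate_false]⟩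
    · intro q hq hqY
      have hmem := (List.of_mem_zip hq).1
      have h0 : H.count q.1 = 0 := by rw [hcnt q.1, hcY q.1 hqY]
      exact (List.count_eq_zero.mp h0 hmem).elim
    · intro i
      have h1 : H.count (x i) = 1 := by rw [hcnt (x i), hc1 i]
      exact mem_zip_replicate_false (List.count_pos_iff.mp (by omega))
  | cons e E ih =>
    intro H hval hcnp
    obtain ⟨hv, hval'⟩ := hval
    obtain ⟨D', hD', hR'⟩ := ih (applyEvent H e) hval' hcnp
    obtain ⟨D, hD, hR⟩ := step Y x H e hv D' hD'
    exact ⟨D, hD, by simp only [List.length_cons]; omega⟩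

lemma count_two [DecidableEq α] :
    ∀ (l : List α) (a : α) (k1 k2 : ℕ) (hlt : k1 < k2) (hk2 : k2 < l.length),
    l[k1]'(by omega) = a → l[k2]'hk2 = a → 2 ≤ l.count a := by
  intro l
  induction l with
  | nil => intro a k1 k2 hlt hk2; simp at hk2
  | cons b t ih =>
    intro a k1 k2 hlt hk2 h1 h2
    cases k1 with
    | zero =>
      have hb : b = a := h1
      subst hb
      cases k2 with
      | zero => omega
      | succ m =>
        have hm : m < t.length := by simpa using hk2
        have ht : t[m]'hm = b := h2
        have hmem : b ∈ t := by rw [← ht]; exact List.getElem_mem _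
        have hc := List.count_pos_iff.mpr hmem
        rw [List.count_cons_self]
        omega
    | succ k1' =>
      cases k2 with
      | zero => omega
      | succ m =>
        have hm : m < t.length := by simpa using hk2
        have hih := ih a k1' m (by omega) hm h1 h2
        rw [List.count_cons]
        omega

lemma count_flat_zero [DecidableEq α] (hx : Function.Injective x) (hXY : ∀ i, x i ∉ Y)
    (Ys : Fin n → List α) (hYs : ∀ i, ∀ a ∈ Ys i, a ∈ Y) (i : Fin n) :
    ∀ L : List (Fin n), i ∉ L → (L.flatMap (fun k => x k :: Ys k)).count (x i) = 0 := by
  intro L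
  induction L with
  | nil => simp
  | cons k t ih =>
    intro hnot
    rw [List.flatMap_cons, List.count_append, List.count_cons]
    have hik : i ≠ k := fun h => hnot (h ▸ List.mem_cons_self)
    have hxik : ¬ (x k = x i) := fun h => hik (hx h).symm
    have hY0 : (Ys k).count (x i) = 0 := List.count_eq_zero.mpr
      (fun hmem => hXY i (hYs k _ hmem))
    rw [ih (fun h => hnot (List.mem_cons_of_mem _ h)), hY0]
    simp [hxik]

lemma count_flat_one [DecidableEq α] (hx : Function.Injective x) (hXY : ∀ i, x i ∉ Y)
    (Ys : Fin n → List α) (hYs : ∀ i, ∀ a ∈ Ys i, a ∈ Y) (i : Fin n) :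
    ∀ L : List (Fin n), L.Nodup → i ∈ L →
    (L.flatMap (fun k => x k :: Ys k)).count (x i) = 1 := by
  intro L
  induction L with
  | nil => simp
  | cons k t ih =>
    intro hnd hmem
    rw [List.flatMap_cons, List.count_append, List.count_cons]
    have hY0 : ∀ m : Fin n, (Ys m).count (x i) = 0 := fun m => List.count_eq_zero.mpr
      (fun hm => hXY i (hYs m _ hm))
    rcases List.mem_cons.mp hmem with h | h
    · subst h
      rw [count_flat_zero Y x hx hXY Ys hYs i t (List.nodup_cons.mp hnd).1, hY0]
      simp
    · have hik : i ≠ k := fun he => (List.nodup_cons.mp hnd).1 (he ▸ h)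
      have hxik : ¬ (x k = x i) := fun he => hik (hx he).symm
      rw [ih (List.nodup_cons.mp hnd).2 h, hY0]
      simp [hxik]

lemma R_allTrue_false_ne {l : List Bool} (h : ∀ b ∈ l, b = true) (hne : l ≠ []) :
    R false l = 1 := by
  cases l with
  | nil => exact absurd rfl hne
  | cons b t =>
    have hb : b = true := h b (by simp)
    subst hb
    rw [R_cons, R_allTrue_true (fun b hb => h b (by simp [hb]))]
    simp

lemma R_flat {ι : Type*} : ∀ (L : List ι) (t : ι → List Bool),
    (∀ i ∈ L, t i ≠ [] ∧ ∀ b ∈ t i, b = true) → ∀ p,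
    R p (L.flatMap fun i => false :: t i) = L.length := by
  intro L
  induction L with
  | nil => intro t _ p; simp
  | cons i L' ih =>
    intro t h p
    rw [List.flatMap_cons]
    have h1 : (false :: t i) ++ L'.flatMap (fun i => false :: t i)
        = false :: (t i ++ L'.flatMap (fun i => false :: t i)) := by simp
    rw [h1, R_cons, R_append]
    have hi := h i (by simp)
    rw [R_allTrue_false_ne hi.2 hi.1, lastD_allTrue hi.2 hi.1]
    rw [ih t (fun j hj => h j (List.mem_cons_of_mem _ hj)) true]
    simp
    omega


lemma mask_forced [DecidableEq α] (hx : Function.Injective x) (hXY : ∀ i, x i ∉ Y)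
    (hall : ∀ a : α, (∃ i, a = x i) ∨ a ∈ Y)
    (Ys : Fin n → List α) (hYs : ∀ i, ∀ a ∈ Ys i, a ∈ Y) (hYne : ∀ i, Ys i ≠ [])
    (D : List Bool)
    (hD : MaskOK Y x ((List.finRange n).flatMap (fun i => x i :: Ys i)) D) :
    n ≤ R false D := by
  classical
  set f : α → Bool := fun a => !(decide (∃ i, a = x i)) with hf
  set G := (List.finRange n).flatMap (fun i => x i :: Ys i) with hGdef
  obtain ⟨hlen, hYmask, hXmask⟩ := hD
  have hcount : ∀ i, G.count (x i) = 1 := fun i =>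
    count_flat_one Y x hx hXY Ys hYs i _ (List.nodup_finRange n) (List.mem_finRange i)
  have hDeq : D = G.map f := by
    apply List.ext_getElem (by simp [hlen])
    intro k hk1 hk2
    have hkG : k < G.length := by simpa using hk2
    have hkz : k < (G.zip D).length := by rw [List.length_zip]; omega
    have hzmem : (G[k]'hkG, D[k]'hk1) ∈ G.zip D := by
      have hgz : (G.zip D)[k]'hkz = (G[k]'hkG, D[k]'hk1) := List.getElem_zip ..
      rw [← hgz]
      exact List.getElem_mem _
    rw [List.getElem_map]
    rcases hall (G[k]'hkG) with ⟨i, hi⟩ | hmem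
    · have hfv : f (G[k]'hkG) = false := by
        have : ∃ j, (G[k]'hkG) = x j := ⟨i, hi⟩
        simp [hf, this]
      rw [hfv]
      by_contra hne
      have hb : D[k]'hk1 = true := by
        cases h' : (D[k]'hk1) with
        | false => exact absurd h' hne
        | true => rfl
      obtain ⟨k', hk', hkeq⟩ := List.mem_iff_getElem.mp (hXmask i)
      have hkG' : k' < G.length := by
        rw [List.length_zip] at hk'; omega
      have hkD' : k' < D.length := by
        rw [List.length_zip] at hk'; omega
      have hgz' : (G.zip D)[k']'hk' = (G[k']'hkG', D[k']'hkD') := List.getElem_zip ..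
      rw [hgz'] at hkeq
      have hG' : G[k']'hkG' = x i := (Prod.mk.injEq _ _ _ _ ▸ hkeq).1
      have hD' : D[k']'hkD' = false := (Prod.mk.injEq _ _ _ _ ▸ hkeq).2
      have hkk : k ≠ k' := by
        intro h
        subst h
        rw [hb] at hD'
        exact Bool.noConfusion hD'
      have h2 : 2 ≤ G.count (x i) := by
        rcases lt_or_gt_of_ne hkk with hlt | hlt
        · exact count_two G (x i) k k' hlt hkG' (by rw [← hi]) hG'
        · exact count_two G (x i) k' k hlt hkG hG' (by rw [← hi])
      rw [hcount i] at h2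
      omega
    · have hDk : D[k]'hk1 = true := hYmask _ hzmem hmem
      have hfv : f (G[k]'hkG) = true := by
        have : ¬ ∃ j, (G[k]'hkG) = x j := fun ⟨j, hj⟩ => hXY j (hj ▸ hmem)
        simp [hf, this]
      rw [hfv, hDk]
  rw [hDeq, hGdef, List.map_flatMap]
  have hhead : ∀ i : Fin n, (x i :: Ys i).map f = false :: ((Ys i).map f) := by
    intro i
    rw [List.map_cons]
    have : ∃ j, x i = x j := ⟨i, rfl⟩
    simp [hf, this]
  rw [show (fun i => (x i :: Ys i).map f) = (fun i => false :: ((Ys i).map f)) from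
    funext hhead]
  rw [R_flat (List.finRange n) (fun i => (Ys i).map f) ?_ false]
  · simp
  · intro i _
    constructor
    · simpa using hYne i
    · rintro b hb
      obtain ⟨a, ha, rfl⟩ := List.mem_map.mp hb
      have : ¬ ∃ j, a = x j := fun ⟨j, hj⟩ => hXY j (hj ▸ hYs i a ha)
      simp [hf, this]


lemma upper_blocks :
    ∀ (blocks : List (α × List α)) (P : List α), (∀ b ∈ blocks, b.2 ≠ []) →
    ∃ E : List GEvent, (∀ e ∈ E, ∃ i j, e = GEvent.del i j) ∧ E.length = blocks.length ∧
      ValidSeq (P ++ blocks.flatMap (fun b => b.1 :: b.2)) E ∧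
      applyEvents (P ++ blocks.flatMap (fun b => b.1 :: b.2)) E = P ++ blocks.map Prod.fst := by
  intro blocks
  induction blocks with
  | nil =>
    intro P _
    exact ⟨[], by simp, rfl, trivial, by simp [applyEvents]⟩
  | cons b bs ih =>
    obtain ⟨a, ys⟩ := b
    intro P hne
    have hys : ys ≠ [] := hne (a, ys) (by simp)
    have hyslen : 1 ≤ ys.length := List.length_pos_iff.mpr hys
    set rest := bs.flatMap (fun b => b.1 :: b.2) with hrest
    set G0 := P ++ ((a, ys) :: bs).flatMap (fun b => b.1 :: b.2) with hG0
    have hG0' : G0 = ((P ++ [a]) ++ ys) ++ rest := by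
      simp only [hG0, List.flatMap_cons, hrest]
      simp
    have hlenG0 : G0.length = P.length + 1 + ys.length + rest.length := by
      rw [hG0']; simp; omega
    set e := GEvent.del (P.length + 2) (P.length + 1 + ys.length) with he
    have htake : G0.take (P.length + 2 - 1) = P ++ [a] := by
      have h1 : P.length + 2 - 1 = (P ++ [a]).length := by simp
      rw [hG0', h1, List.append_assoc, List.take_left]
    have hdrop : G0.drop (P.length + 1 + ys.length) = rest := by
      have h1 : P.length + 1 + ys.length = ((P ++ [a]) ++ ys).length := by simp; omega
      rw [hG0', h1, List.drop_left]
    have happ : applyEvent G0 e = (P ++ [a]) ++ rest := by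
      show G0.take (P.length + 2 - 1) ++ G0.drop (P.length + 1 + ys.length) = _
      rw [htake, hdrop]
    have hvalid : e.Valid G0 := by
      refine ⟨by omega, by omega, by omega⟩
    obtain ⟨E', hdel', hlen', hvs', happly'⟩ := ih (P ++ [a])
      (fun b hb => hne b (List.mem_cons_of_mem _ hb))
    refine ⟨e :: E', ?_, by simp [hlen'], ⟨hvalid, ?_⟩, ?_⟩
    · intro e' he'
      rcases List.mem_cons.mp he' with h | h
      · exact ⟨_, _, h⟩
      · exact hdel' e' h
    · rw [happ]; exact hvs'
    · show applyEvents (applyEvent G0 e) E' = _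
      rw [happ, happly']
      simp

end Steps

end AltEqAux

/-- equality case of Lemma 5 of the paper: let the alphabet `α` be the
disjoint union of `X = {x 0, …, x (n−1)}` (the `x i` being pairwise distinct) and `Y`.
Let `G = x₁ Y₁ x₂ Y₂ ⋯ xₙ Yₙ` where each `Yᵢ` is a nonempty string over `Y`, and let
`c` be the CNP with `c(xᵢ) = 1` for all `i` and `c(y) = 0` for all `y ∈ Y`.
Then `d_GCNP(G, c) = n`; in particular the distance is achieved by a sequence of `n`
deletions (removing the substrings `Y₁, …, Yₙ`). -/
theorem alternating_eq
    {α : Type*} [DecidableEq α] (n : ℕ)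
    (x : Fin n → α) (hx : Function.Injective x)
    (Y : Set α)
    (hXY : ∀ i, x i ∉ Y)
    (hall : ∀ a : α, (∃ i, a = x i) ∨ a ∈ Y)
    (Ys : Fin n → List α)
    (hYs : ∀ i, ∀ a ∈ Ys i, a ∈ Y)
    (hYne : ∀ i, Ys i ≠ [])
    (c : α → ℕ)
    (hc1 : ∀ i, c (x i) = 1)
    (hc0 : ∀ a ∈ Y, c a = 0)
    (G : List α)
    (hG : G = (List.finRange n).flatMap (fun i => x i :: Ys i)) :
    dGCNP G c = (n : ℕ∞) ∧
    ∃ E : List GEvent,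
      (∀ e ∈ E, ∃ i j, e = GEvent.del i j) ∧
      E.length = n ∧
      ValidSeq G E ∧
      cnp (applyEvents G E) = c := by
  classical
  -- the upper-bound witness: n deletions
  obtain ⟨E, hdel, hElen, hvs, happly⟩ := AltEqAux.upper_blocks
    ((List.finRange n).map (fun i => (x i, Ys i))) []
    (by
      rintro ⟨a, ys⟩ hb
      obtain ⟨i, _, heq⟩ := List.mem_map.mp hb
      exact (congrArg Prod.snd heq) ▸ hYne i)
  have hGb : [] ++ (((List.finRange n).map (fun i => (x i, Ys i))).flatMap
      (fun b => b.1 :: b.2)) = G := by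
    rw [hG, List.flatMap_map]
    simp
  have hfin_eq : ([] : List α) ++ (((List.finRange n).map (fun i => (x i, Ys i))).map
      Prod.fst) = (List.finRange n).map x := by
    simp [List.map_map]
  rw [hGb] at hvs happly
  rw [hfin_eq] at happly
  have hElen' : E.length = n := by simpa using hElen
  have hfinal : cnp ((List.finRange n).map x) = c := by
    funext a
    rcases hall a with ⟨i, rfl⟩ | haY
    · show ((List.finRange n).map x).count (x i) = c (x i)
      rw [List.count_map_of_injective _ x hx i, hc1 i]
      exact List.count_eq_one_of_mem (List.nodup_finRange n) (List.mem_finRange i)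
    · show ((List.finRange n).map x).count a = c a
      rw [hc0 a haY]
      refine List.count_eq_zero.mpr ?_
      intro hmem
      obtain ⟨i, _, hxi⟩ := List.mem_map.mp hmem
      exact hXY i (hxi ▸ haY)
  have hcnp : cnp (applyEvents G E) = c := by rw [happly]; exact hfinal
  -- the lower bound
  have hlb : ∀ (E' : List GEvent), ValidSeq G E' → cnp (applyEvents G E') = c →
      n ≤ E'.length := by
    intro E' hv hc
    obtain ⟨D, hD, hR⟩ := AltEqAux.lower_masks Y x c hc1 hc0 E' G hv hc
    rw [hG] at hD
    have hn := AltEqAux.mask_forced Y x hx hXY hall Ys hYs hYne D hD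
    omega
  have hmem : (n : ℕ∞) ∈ {k : ℕ∞ | ∃ E : List GEvent,
      ValidSeq G E ∧ (E.length : ℕ∞) = k ∧ cnp (applyEvents G E) = c} :=
    ⟨E, hvs, by rw [hElen'], hcnp⟩
  refine ⟨le_antisymm (sInf_le hmem) ?_, E, hdel, hElen', hvs, hcnp⟩
  apply le_sInf
  rintro k ⟨E', hv', hk, hc'⟩
  rw [← hk]
  exact_mod_cast hlb E' hv' hc'
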